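/- Let m, n, k be positive integers with m > 2. The total number of weak homomorphisms from P_m to the rectangular grid graph P_n □ P_k is |WHom(P_m, P_n □ P_k)| = 4 · Σ_{i=0}^{⌊n/2⌋−1} Σ_{j=0}^{⌊k/2⌋−1} |WHom^{ij}(P_m, P_n □ P_k)| + (1 − (−1)^n) · Σ_{j=0}^{⌊k/2⌋−1} |WHom^{⌊n/2⌋ j}(P_m, P_n □ P_k)| + (1 − (−1)^k) · Σ_{i=0}^{⌊n/2⌋−1} |WHom^{i ⌊k/2⌋}(P_m, P_n □ P_k)| + (1/4)(1 − (−1)^n)(1 − (−1)^k) · |WHom^{⌊n/2⌋ ⌊k/2⌋}(P_m, P_n □ P_k)|. -/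
import Mathlib
open Finset

def natAdj (a b : ℕ) : Prop := a = b + 1 ∨ b = a + 1

def IsGridWHom (m n k : ℕ) (f : Fin m → ℕ × ℕ) : Prop :=
  (∀ x, (f x).1 < n ∧ (f x).2 < k) ∧
  ∀ (x : ℕ) (h : x + 1 < m),
    f ⟨x + 1, h⟩ = f ⟨x, Nat.lt_of_succ_lt h⟩ ∨
    (natAdj (f ⟨x + 1, h⟩).1 (f ⟨x, Nat.lt_of_succ_lt h⟩).1 ∧
      (f ⟨x + 1, h⟩).2 = (f ⟨x, Nat.lt_of_succ_lt h⟩).2) ∨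
    ((f ⟨x + 1, h⟩).1 = (f ⟨x, Nat.lt_of_succ_lt h⟩).1 ∧
      natAdj (f ⟨x + 1, h⟩).2 (f ⟨x, Nat.lt_of_succ_lt h⟩).2)

noncomputable def gridWHomCountAt (m n k i j : ℕ) : ℕ :=
  Nat.card {f : Fin m → ℕ × ℕ // IsGridWHom m n k f ∧ ∀ h : 0 < m, f ⟨0, h⟩ = (i, j)}

noncomputable def gridWHomCount (m n k : ℕ) : ℕ :=
  Nat.card {f : Fin m → ℕ × ℕ // IsGridWHom m n k f}

lemma finite_whom {m n k : ℕ} (P : (Fin m → ℕ × ℕ) → Prop)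
    (hP : ∀ f, P f → ∀ x, (f x).1 < n ∧ (f x).2 < k) :
    Finite {f : Fin m → ℕ × ℕ // P f} := by
  have hinj : Function.Injective (fun (f : {f : Fin m → ℕ × ℕ // P f}) =>
      (fun x => (⟨(f.1 x).1, (hP f.1 f.2 x).1⟩, ⟨(f.1 x).2, (hP f.1 f.2 x).2⟩) :
        Fin m → Fin n × Fin k)) := by
    intro f g h
    apply Subtype.ext; funext x
    have := congrFun h x
    simp only [Prod.mk.injEq, Fin.mk.injEq] at this
    exact Prod.ext this.1 this.2
  exact Finite.of_injective _ hinj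

instance instF1 (m n k : ℕ) : Finite {f : Fin m → ℕ × ℕ // IsGridWHom m n k f} :=
  finite_whom _ (fun _ hf => hf.1)

instance instF2 (m n k i j : ℕ) :
    Finite {f : Fin m → ℕ × ℕ // IsGridWHom m n k f ∧ ∀ h : 0 < m, f ⟨0, h⟩ = (i, j)} :=
  finite_whom _ (fun _ hf => hf.1.1)

lemma nat_card_sigma {ι : Type*} [Fintype ι] (f : ι → Type*) [∀ i, Finite (f i)] :
    Nat.card (Σ i, f i) = ∑ i, Nat.card (f i) := by
  have : ∀ i, Fintype (f i) := fun i => Fintype.ofFinite (f i)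
  simp [Nat.card_eq_fintype_card, Fintype.card_sigma]

lemma count_split (m n k : ℕ) (hm : 0 < m) :
    gridWHomCount m n k =
      ∑ i ∈ Finset.range n, ∑ j ∈ Finset.range k, gridWHomCountAt m n k i j := by
  classical
  set T := {f : Fin m → ℕ × ℕ // IsGridWHom m n k f} with hT
  let φ : T → Fin n × Fin k := fun f =>
    (⟨(f.1 ⟨0, hm⟩).1, (f.2.1 ⟨0, hm⟩).1⟩, ⟨(f.1 ⟨0, hm⟩).2, (f.2.1 ⟨0, hm⟩).2⟩)
  have h1 : gridWHomCount m n k = Nat.card ((p : Fin n × Fin k) × {t : T // φ t = p}) :=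
    (Nat.card_congr (Equiv.sigmaFiberEquiv φ)).symm
  have hfib : ∀ p : Fin n × Fin k,
      Nat.card {t : T // φ t = p} = gridWHomCountAt m n k p.1 p.2 := by
    intro p
    apply Nat.card_congr
    refine ⟨fun t => ⟨t.1.1, t.1.2, fun h => ?_⟩, fun f => ⟨⟨f.1, f.2.1⟩, ?_⟩,
      fun t => Subtype.ext (Subtype.ext rfl), fun f => Subtype.ext rfl⟩
    · have hp := t.2
      have e1 : (t.1.1 ⟨0, hm⟩).1 = (p.1 : ℕ) := congrArg (fun q => (q.1 : ℕ)) hp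
      have e2 : (t.1.1 ⟨0, hm⟩).2 = (p.2 : ℕ) := congrArg (fun q => (q.2 : ℕ)) hp
      have e0 : (⟨0, h⟩ : Fin m) = ⟨0, hm⟩ := rfl
      rw [e0]
      exact Prod.ext e1 e2
    · have h0 := f.2.2 hm
      apply Prod.ext <;> apply Fin.ext
      · show (f.1 ⟨0, hm⟩).1 = (p.1 : ℕ)
        rw [h0]
      · show (f.1 ⟨0, hm⟩).2 = (p.2 : ℕ)
        rw [h0]
  rw [h1, nat_card_sigma]
  simp_rw [hfib]
  rw [Fintype.sum_prod_type]
  rw [Fin.sum_univ_eq_sum_range (fun i => ∑ j : Fin k, gridWHomCountAt m n k i j)]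
  exact Finset.sum_congr rfl fun i _ =>
    Fin.sum_univ_eq_sum_range (fun j => gridWHomCountAt m n k i j) k
lemma whom_refl1 {m n k : ℕ} {f : Fin m → ℕ × ℕ} (hf : IsGridWHom m n k f) :
    IsGridWHom m n k (fun x => (n - 1 - (f x).1, (f x).2)) := by
  obtain ⟨hb, ha⟩ := hf
  refine ⟨fun x => ?_, fun x h => ?_⟩
  · show n - 1 - (f x).1 < n ∧ (f x).2 < k
    exact ⟨by have := (hb x).1; omega, (hb x).2⟩
  · rcases ha x h with h1 | ⟨h1, h2⟩ | ⟨h1, h2⟩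
    · left; simp [h1]
    · right; left
      have b1 := (hb ⟨x + 1, h⟩).1
      have b2 := (hb ⟨x, Nat.lt_of_succ_lt h⟩).1
      refine ⟨?_, by simp [h2]⟩
      show natAdj (n - 1 - (f ⟨x + 1, h⟩).1) (n - 1 - (f ⟨x, Nat.lt_of_succ_lt h⟩).1)
      simp only [natAdj] at h1 ⊢
      omega
    · right; right; exact ⟨by simp [h1], by simpa using h2⟩

lemma whom_refl2 {m n k : ℕ} {f : Fin m → ℕ × ℕ} (hf : IsGridWHom m n k f) :
    IsGridWHom m n k (fun x => ((f x).1, k - 1 - (f x).2)) := by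
  obtain ⟨hb, ha⟩ := hf
  refine ⟨fun x => ?_, fun x h => ?_⟩
  · show (f x).1 < n ∧ k - 1 - (f x).2 < k
    exact ⟨(hb x).1, by have := (hb x).2; omega⟩
  · rcases ha x h with h1 | ⟨h1, h2⟩ | ⟨h1, h2⟩
    · left; simp [h1]
    · right; left; exact ⟨by simpa using h1, by simp [h2]⟩
    · right; right
      have b1 := (hb ⟨x + 1, h⟩).2
      have b2 := (hb ⟨x, Nat.lt_of_succ_lt h⟩).2
      refine ⟨by simp [h1], ?_⟩
      show natAdj (k - 1 - (f ⟨x + 1, h⟩).2) (k - 1 - (f ⟨x, Nat.lt_of_succ_lt h⟩).2)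
      simp only [natAdj] at h2 ⊢
      omega

lemma countAt_refl1 (m n k i j : ℕ) (hi : i < n) :
    gridWHomCountAt m n k i j = gridWHomCountAt m n k (n - 1 - i) j := by
  apply Nat.card_congr
  refine ⟨fun f => ⟨fun x => (n - 1 - (f.1 x).1, (f.1 x).2), whom_refl1 f.2.1, fun h => ?_⟩,
    fun f => ⟨fun x => (n - 1 - (f.1 x).1, (f.1 x).2), whom_refl1 f.2.1, fun h => ?_⟩, ?_, ?_⟩
  · show (n - 1 - (f.1 ⟨0, h⟩).1, (f.1 ⟨0, h⟩).2) = (n - 1 - i, j)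
    rw [f.2.2 h]
  · show (n - 1 - (f.1 ⟨0, h⟩).1, (f.1 ⟨0, h⟩).2) = (i, j)
    rw [f.2.2 h]
    exact Prod.ext (by show n - 1 - (n - 1 - i) = i; omega) rfl
  · intro f
    apply Subtype.ext; funext x
    have := (f.2.1.1 x).1
    show (n - 1 - (n - 1 - (f.1 x).1), (f.1 x).2) = f.1 x
    exact Prod.ext (by omega) rfl
  · intro f
    apply Subtype.ext; funext x
    have := (f.2.1.1 x).1
    show (n - 1 - (n - 1 - (f.1 x).1), (f.1 x).2) = f.1 x
    exact Prod.ext (by omega) rfl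

lemma countAt_refl2 (m n k i j : ℕ) (hj : j < k) :
    gridWHomCountAt m n k i j = gridWHomCountAt m n k i (k - 1 - j) := by
  apply Nat.card_congr
  refine ⟨fun f => ⟨fun x => ((f.1 x).1, k - 1 - (f.1 x).2), whom_refl2 f.2.1, fun h => ?_⟩,
    fun f => ⟨fun x => ((f.1 x).1, k - 1 - (f.1 x).2), whom_refl2 f.2.1, fun h => ?_⟩, ?_, ?_⟩
  · show ((f.1 ⟨0, h⟩).1, k - 1 - (f.1 ⟨0, h⟩).2) = (i, k - 1 - j)
    rw [f.2.2 h]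
  · show ((f.1 ⟨0, h⟩).1, k - 1 - (f.1 ⟨0, h⟩).2) = (i, j)
    rw [f.2.2 h]
    exact Prod.ext rfl (by show k - 1 - (k - 1 - j) = j; omega)
  · intro f
    apply Subtype.ext; funext x
    have := (f.2.1.1 x).2
    show ((f.1 x).1, k - 1 - (k - 1 - (f.1 x).2)) = f.1 x
    exact Prod.ext rfl (by omega)
  · intro f
    apply Subtype.ext; funext x
    have := (f.2.1.1 x).2
    show ((f.1 x).1, k - 1 - (k - 1 - (f.1 x).2)) = f.1 x
    exact Prod.ext rfl (by omega)

lemma fold_sum (n : ℕ) (g : ℕ → ℚ) (hg : ∀ i < n, g i = g (n - 1 - i)) :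
    ∑ i ∈ Finset.range n, g i =
      2 * ∑ i ∈ Finset.range (n / 2), g i + ((n % 2 : ℕ) : ℚ) * g (n / 2) := by
  rcases Nat.even_or_odd n with ⟨q, hq⟩ | ⟨q, hq⟩
  · subst hq
    rw [Finset.sum_range_add]
    have key : ∑ i ∈ Finset.range q, g (q + i) = ∑ i ∈ Finset.range q, g i := by
      rw [show (∑ i ∈ Finset.range q, g (q + i)) =
          ∑ i ∈ Finset.range q, g (q - 1 - i) from
        Finset.sum_congr rfl fun i hi => by
          rw [Finset.mem_range] at hi
          rw [hg (q + i) (by omega)]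
          congr 1; omega]
      exact Finset.sum_range_reflect g q
    rw [key]
    have hq2 : (q + q) / 2 = q := by omega
    have hq3 : (q + q) % 2 = 0 := by omega
    rw [hq2, hq3]
    push_cast
    ring
  · subst hq
    have hrw : 2 * q + 1 = q + (q + 1) := by ring
    rw [hrw, Finset.sum_range_add, Finset.sum_range_succ' (fun i => g (q + i)) q]
    have key : ∑ i ∈ Finset.range q, g (q + (i + 1)) = ∑ i ∈ Finset.range q, g i := by
      rw [show (∑ i ∈ Finset.range q, g (q + (i + 1))) =
          ∑ i ∈ Finset.range q, g (q - 1 - i) from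
        Finset.sum_congr rfl fun i hi => by
          rw [Finset.mem_range] at hi
          rw [hg (q + (i + 1)) (by omega)]
          congr 1; omega]
      exact Finset.sum_range_reflect g q
    rw [key]
    have hq2 : (q + (q + 1)) / 2 = q := by omega
    have hq3 : (q + (q + 1)) % 2 = 1 := by omega
    rw [hq2, hq3]
    push_cast
    ring

lemma parity_coeff (n : ℕ) : (1 - (-1 : ℚ) ^ n) = 2 * ((n % 2 : ℕ) : ℚ) := by
  rcases Nat.even_or_odd n with h | h
  · simp [h.neg_one_pow, Nat.even_iff.mp h]
  · simp [h.neg_one_pow, Nat.odd_iff.mp h]; norm_num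

/-- the full counting formula for `|WHom(P_m, P_n □ P_k)|` in terms of the
counts `|WHom^{ij}(P_m, P_n □ P_k)|`, for arbitrary parities of `n` and `k`. -/
theorem gridWHomCount_formula (m n k : ℕ) (hm : 2 < m) (hn : 0 < n) (hk : 0 < k) :
    (gridWHomCount m n k : ℚ) =
      4 * ∑ i ∈ Finset.range (n / 2), ∑ j ∈ Finset.range (k / 2),
            (gridWHomCountAt m n k i j : ℚ) +
      (1 - (-1 : ℚ) ^ n) * ∑ j ∈ Finset.range (k / 2), (gridWHomCountAt m n k (n / 2) j : ℚ) +
      (1 - (-1 : ℚ) ^ k) * ∑ i ∈ Finset.range (n / 2), (gridWHomCountAt m n k i (k / 2) : ℚ) +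
      (1 / 4) * (1 - (-1 : ℚ) ^ n) * (1 - (-1 : ℚ) ^ k) *
        (gridWHomCountAt m n k (n / 2) (k / 2) : ℚ) := by
  have hm0 : 0 < m := by omega
  have h0 : (gridWHomCount m n k : ℚ) =
      ∑ i ∈ Finset.range n, ∑ j ∈ Finset.range k, (gridWHomCountAt m n k i j : ℚ) := by
    rw [count_split m n k hm0]; push_cast; rfl
  have hfoldj : ∀ i, ∑ j ∈ Finset.range k, (gridWHomCountAt m n k i j : ℚ) =
      2 * ∑ j ∈ Finset.range (k / 2), (gridWHomCountAt m n k i j : ℚ) +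
        ((k % 2 : ℕ) : ℚ) * (gridWHomCountAt m n k i (k / 2) : ℚ) := fun i =>
    fold_sum k _ (fun j hj => by exact_mod_cast countAt_refl2 m n k i j hj)
  have hfoldi : ∀ j, ∑ i ∈ Finset.range n, (gridWHomCountAt m n k i j : ℚ) =
      2 * ∑ i ∈ Finset.range (n / 2), (gridWHomCountAt m n k i j : ℚ) +
        ((n % 2 : ℕ) : ℚ) * (gridWHomCountAt m n k (n / 2) j : ℚ) := fun j =>
    fold_sum n _ (fun i hi => by exact_mod_cast countAt_refl1 m n k i j hi)
  have step1 : ∑ i ∈ Finset.range n, ∑ j ∈ Finset.range k, (gridWHomCountAt m n k i j : ℚ) =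
      2 * ∑ i ∈ Finset.range n, ∑ j ∈ Finset.range (k / 2), (gridWHomCountAt m n k i j : ℚ) +
        ((k % 2 : ℕ) : ℚ) * ∑ i ∈ Finset.range n, (gridWHomCountAt m n k i (k / 2) : ℚ) := by
    rw [Finset.sum_congr rfl (fun i _ => hfoldj i), Finset.sum_add_distrib,
      ← Finset.mul_sum, ← Finset.mul_sum]
  have step2 : ∑ i ∈ Finset.range n, ∑ j ∈ Finset.range (k / 2), (gridWHomCountAt m n k i j : ℚ) =
      2 * ∑ i ∈ Finset.range (n / 2), ∑ j ∈ Finset.range (k / 2), (gridWHomCountAt m n k i j : ℚ) +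
        ((n % 2 : ℕ) : ℚ) * ∑ j ∈ Finset.range (k / 2), (gridWHomCountAt m n k (n / 2) j : ℚ) := by
    rw [Finset.sum_comm, Finset.sum_congr rfl (fun j _ => hfoldi j), Finset.sum_add_distrib,
      ← Finset.mul_sum, ← Finset.mul_sum, Finset.sum_comm]
  have step3 := hfoldi (k / 2)
  rw [h0, step1, step2, step3, parity_coeff n, parity_coeff k]
  ring
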